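/- For complex matrices A (m×n), B (m×p), C (q×n), the rank of the 2×2 block matrix [[A, B],[C, 0]] equals r(B) + r(C) + r(E_B · A · F_C), where E_B = I_m - B·B† and F_C = I_n - C†·C. -/

import Mathlib

open Matrix

/-- `X` satisfies the four Penrose equations for `A`, i.e. `X` is the
Moore–Penrose inverse of `A`. -/
def IsMP {m n : Type*} [Fintype m] [Fintype n]
    (A : Matrix m n ℂ) (X : Matrix n m ℂ) : Prop :=
  A * X * A = A ∧ X * A * X = X ∧ (A * X)ᴴ = A * X ∧ (X * A)ᴴ = X * A

/-- the number of positive eigenvalues (with multiplicity) of a Hermitian matrix -/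
noncomputable def iPos {n : Type*} [Fintype n] [DecidableEq n] {A : Matrix n n ℂ}
    (hA : A.IsHermitian) : ℕ := Nat.card {i // 0 < hA.eigenvalues i}

/-- the number of negative eigenvalues (with multiplicity) of a Hermitian matrix -/
noncomputable def iNeg {n : Type*} [Fintype n] [DecidableEq n] {A : Matrix n n ℂ}
    (hA : A.IsHermitian) : ℕ := Nat.card {i // hA.eigenvalues i < 0}

/-- every complex matrix has a `{1}`-inverse -/
lemma exists_oneInv {a b : Type*} [Fintype a] [Fintype b] [DecidableEq a] [DecidableEq b]
    (G : Matrix a b ℂ) : ∃ X : Matrix b a ℂ, G * X * G = G := by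
  set f := Matrix.toLin' G with hf
  obtain ⟨s, hs⟩ := f.rangeRestrict.exists_rightInverse_of_surjective f.range_rangeRestrict
  obtain ⟨qc, hqc⟩ := Submodule.exists_isCompl (LinearMap.range f)
  set proj := (LinearMap.range f).linearProjOfIsCompl qc hqc with hproj
  set g : (a → ℂ) →ₗ[ℂ] (b → ℂ) := s.comp proj with hg
  refine ⟨LinearMap.toMatrix' g, ?_⟩
  apply Matrix.toLin'.injective
  rw [Matrix.toLin'_mul, Matrix.toLin'_mul, Matrix.toLin'_toMatrix', ← hf]
  refine LinearMap.ext fun x => ?_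
  simp only [LinearMap.comp_apply, hg]
  have h1 : proj (f x) = ⟨f x, LinearMap.mem_range_self f x⟩ := by
    rw [hproj]
    exact Submodule.linearProjOfIsCompl_apply_left hqc ⟨f x, LinearMap.mem_range_self f x⟩
  rw [h1]
  have h2 : f (s ⟨f x, LinearMap.mem_range_self f x⟩)
      = ((f.rangeRestrict.comp s) ⟨f x, LinearMap.mem_range_self f x⟩ : a → ℂ) := rfl
  rw [h2, hs]
  rfl

/-- rank is additive for a sum of matrices whose ranges are "independent". -/
lemma rank_add_disj {k l : Type*} [Fintype k] [Fintype l] [DecidableEq l]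
    (M N : Matrix k l ℂ) (X : Matrix l l ℂ) (hX : (M + N) * X = M)
    (hdisj : ∀ v, v ∈ LinearMap.range M.mulVecLin → v ∈ LinearMap.range N.mulVecLin →
      v = (0 : k → ℂ)) :
    (M + N).rank = M.rank + N.rank := by
  have hY : (M + N) * (1 - X) = N := by
    rw [Matrix.mul_sub, Matrix.mul_one, hX, add_sub_cancel_left]
  have hr : LinearMap.range (M + N).mulVecLin
      = LinearMap.range M.mulVecLin ⊔ LinearMap.range N.mulVecLin := by
    apply le_antisymm
    · rintro _ ⟨x, rfl⟩
      rw [mulVecLin_add, LinearMap.add_apply]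
      exact Submodule.add_mem_sup ⟨x, rfl⟩ ⟨x, rfl⟩
    · apply sup_le
      · have h := LinearMap.range_comp_le_range X.mulVecLin (M + N).mulVecLin
        rwa [← mulVecLin_mul, hX] at h
      · have h := LinearMap.range_comp_le_range (1 - X).mulVecLin (M + N).mulVecLin
        rwa [← mulVecLin_mul, hY] at h
  have hdis : Disjoint (LinearMap.range M.mulVecLin) (LinearMap.range N.mulVecLin) := by
    rw [Submodule.disjoint_def]
    exact fun v hv1 hv2 => hdisj v hv1 hv2
  rw [Matrix.rank, Matrix.rank, Matrix.rank, hr,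
    ← Submodule.finrank_sup_add_finrank_inf_eq, hdis.eq_bot, finrank_bot, add_zero]

lemma rank_fromBlocks_inl {m n p q : Type*} [Fintype m] [Fintype n] [Fintype p] [Fintype q]
    [DecidableEq m] [DecidableEq n] [DecidableEq p] [DecidableEq q]
    (A : Matrix m n ℂ) :
    (fromBlocks A (0 : Matrix m p ℂ) (0 : Matrix q n ℂ) (0 : Matrix q p ℂ)).rank = A.rank := by
  have h1 : fromBlocks A (0 : Matrix m p ℂ) (0 : Matrix q n ℂ) (0 : Matrix q p ℂ)
      = (fromRows (1 : Matrix m m ℂ) (0 : Matrix q m ℂ) * A)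
        * fromCols (1 : Matrix n n ℂ) (0 : Matrix n p ℂ) := by
    rw [fromRows_mul, fromRows_mul_fromCols]
    simp
  have h2 : A = fromCols (1 : Matrix m m ℂ) (0 : Matrix m q ℂ)
      * (fromBlocks A (0 : Matrix m p ℂ) (0 : Matrix q n ℂ) (0 : Matrix q p ℂ)
        * fromRows (1 : Matrix n n ℂ) (0 : Matrix p n ℂ)) := by
    rw [fromBlocks_mul_fromRows, fromCols_mul_fromRows]
    simp
  apply le_antisymm
  · rw [h1]
    exact le_trans (rank_mul_le_left _ _) (rank_mul_le_right _ _)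
  · conv_lhs => rw [h2]
    exact le_trans (rank_mul_le_right _ _) (rank_mul_le_left _ _)

lemma rank_fromBlocks_inr {m n p q : Type*} [Fintype m] [Fintype n] [Fintype p] [Fintype q]
    [DecidableEq m] [DecidableEq n] [DecidableEq p] [DecidableEq q]
    (D : Matrix q p ℂ) :
    (fromBlocks (0 : Matrix m n ℂ) (0 : Matrix m p ℂ) (0 : Matrix q n ℂ) D).rank = D.rank := by
  have h1 : fromBlocks (0 : Matrix m n ℂ) (0 : Matrix m p ℂ) (0 : Matrix q n ℂ) D
      = (fromRows (0 : Matrix m q ℂ) (1 : Matrix q q ℂ) * D)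
        * fromCols (0 : Matrix p n ℂ) (1 : Matrix p p ℂ) := by
    rw [fromRows_mul, fromRows_mul_fromCols]
    simp
  have h2 : D = fromCols (0 : Matrix q m ℂ) (1 : Matrix q q ℂ)
      * (fromBlocks (0 : Matrix m n ℂ) (0 : Matrix m p ℂ) (0 : Matrix q n ℂ) D
        * fromRows (0 : Matrix n p ℂ) (1 : Matrix p p ℂ)) := by
    rw [fromBlocks_mul_fromRows, fromCols_mul_fromRows]
    simp
  apply le_antisymm
  · rw [h1]
    exact le_trans (rank_mul_le_left _ _) (rank_mul_le_right _ _)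
  · conv_lhs => rw [h2]
    exact le_trans (rank_mul_le_right _ _) (rank_mul_le_left _ _)

/-- rank of a block-diagonal matrix is the sum of the ranks. -/
lemma rank_fromBlocks_diag {m n p q : Type*} [Fintype m] [Fintype n] [Fintype p] [Fintype q]
    [DecidableEq m] [DecidableEq n] [DecidableEq p] [DecidableEq q]
    (A : Matrix m n ℂ) (D : Matrix q p ℂ) :
    (fromBlocks A 0 0 D).rank = A.rank + D.rank := by
  have hsum : fromBlocks A (0 : Matrix m p ℂ) (0 : Matrix q n ℂ) D
      = fromBlocks A 0 0 0 + fromBlocks 0 0 0 D := by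
    rw [fromBlocks_add]; simp
  have hX : (fromBlocks A (0 : Matrix m p ℂ) (0 : Matrix q n ℂ) 0 + fromBlocks 0 0 0 D)
      * fromBlocks (1 : Matrix n n ℂ) 0 0 (0 : Matrix p p ℂ) = fromBlocks A 0 0 0 := by
    rw [← hsum, fromBlocks_multiply]
    simp
  rw [hsum, rank_add_disj _ _ _ hX, rank_fromBlocks_inl, rank_fromBlocks_inr]
  rintro v ⟨x, hx⟩ ⟨y, hy⟩
  funext i
  cases i with
  | inl i =>
      rw [← hy]
      simp [mulVecLin_apply, fromBlocks_mulVec]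
  | inr i =>
      rw [← hx]
      simp [mulVecLin_apply, fromBlocks_mulVec]

theorem stmt1 (m n p q : ℕ) (A : Matrix (Fin m) (Fin n) ℂ) (B : Matrix (Fin m) (Fin p) ℂ)
    (C : Matrix (Fin q) (Fin n) ℂ)
    (Bd : Matrix (Fin p) (Fin m) ℂ) (hBd : IsMP B Bd)
    (Cd : Matrix (Fin n) (Fin q) ℂ) (hCd : IsMP C Cd) :
    (fromBlocks A B C 0).rank
      = B.rank + C.rank + ((1 - B * Bd) * A * (1 - Cd * C)).rank := by
  obtain ⟨hB1, hB2, -, -⟩ := hBd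
  obtain ⟨hC1, hC2, -, -⟩ := hCd
  set EB : Matrix (Fin m) (Fin m) ℂ := 1 - B * Bd with hEB
  set FC : Matrix (Fin n) (Fin n) ℂ := 1 - Cd * C with hFC
  set G : Matrix (Fin m) (Fin n) ℂ := EB * A * FC with hG
  have hEBB : EB * B = 0 := by rw [hEB, Matrix.sub_mul, Matrix.one_mul, hB1, sub_self]
  have hCFC : C * FC = 0 := by
    rw [hFC, Matrix.mul_sub, Matrix.mul_one, ← Matrix.mul_assoc, hC1, sub_self]
  have hBdEB : Bd * EB = 0 := by
    rw [hEB, Matrix.mul_sub, Matrix.mul_one, ← Matrix.mul_assoc, hB2, sub_self]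
  have hFCCd : FC * Cd = 0 := by rw [hFC, Matrix.sub_mul, Matrix.one_mul, hC2, sub_self]
  have hEBEB : EB * EB = EB := by
    nth_rewrite 2 [hEB]
    rw [Matrix.mul_sub, Matrix.mul_one, ← Matrix.mul_assoc, hEBB, Matrix.zero_mul, sub_zero]
  have hFCFC : FC * FC = FC := by
    nth_rewrite 2 [hFC]
    rw [Matrix.mul_sub, Matrix.mul_one, ← Matrix.mul_assoc, hFCCd, Matrix.zero_mul, sub_zero]
  have hGFC : G * FC = G := by rw [hG, Matrix.mul_assoc (EB * A) FC FC, hFCFC]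
  have hEBG : EB * G = G := by
    rw [hG, ← Matrix.mul_assoc, ← Matrix.mul_assoc, hEBEB]
  have hBdG : Bd * G = 0 := by
    rw [hG, ← Matrix.mul_assoc, ← Matrix.mul_assoc, hBdEB, Matrix.zero_mul, Matrix.zero_mul]
  have hGCd : G * Cd = 0 := by rw [hG, Matrix.mul_assoc (EB * A) FC Cd, hFCCd, Matrix.mul_zero]
  obtain ⟨X, hX⟩ := exists_oneInv G
  set Gd : Matrix (Fin n) (Fin m) ℂ := FC * (X * EB) with hGd
  have hGdG : G * Gd * G = G := by
    rw [hGd, ← Matrix.mul_assoc G FC _, hGFC, ← Matrix.mul_assoc G X EB,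
      Matrix.mul_assoc (G * X) EB G, hEBG, hX]
  have hGdB : Gd * B = 0 := by
    rw [hGd, Matrix.mul_assoc FC (X * EB) B, Matrix.mul_assoc X EB B, hEBB,
      Matrix.mul_zero, Matrix.mul_zero]
  have hCGd : C * Gd = 0 := by rw [hGd, ← Matrix.mul_assoc, hCFC, Matrix.zero_mul]
  -- step 1: reduce to fromBlocks G B C 0
  have hR : IsUnit (fromBlocks (1 : Matrix (Fin n) (Fin n) ℂ) 0 (-(Bd * A))
      (1 : Matrix (Fin p) (Fin p) ℂ)).det := by
    rw [det_fromBlocks_zero₁₂]; simp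
  have hL : IsUnit (fromBlocks (1 : Matrix (Fin m) (Fin m) ℂ) (-(EB * A * Cd)) 0
      (1 : Matrix (Fin q) (Fin q) ℂ)).det := by
    rw [det_fromBlocks_zero₂₁]; simp
  have hblock : (1 : Matrix (Fin m) (Fin m) ℂ) * (A * (1 : Matrix (Fin n) (Fin n) ℂ)
        + B * -(Bd * A))
      + -(EB * A * Cd) * (C * (1 : Matrix (Fin n) (Fin n) ℂ)
        + (0 : Matrix (Fin q) (Fin p) ℂ) * -(Bd * A)) = G := by
    have h1 : EB * A = A - B * (Bd * A) := by
      rw [hEB, Matrix.sub_mul, Matrix.one_mul, Matrix.mul_assoc]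
    have h2 : G = EB * A - EB * A * Cd * C := by
      rw [hG, hFC, Matrix.mul_sub, Matrix.mul_one, ← Matrix.mul_assoc (EB * A) Cd C]
    simp only [Matrix.one_mul, Matrix.mul_one, Matrix.zero_mul, Matrix.mul_neg,
      Matrix.neg_mul, add_zero]
    rw [h2, h1]
    abel_nf
  have key : fromBlocks (1 : Matrix (Fin m) (Fin m) ℂ) (-(EB * A * Cd)) 0
        (1 : Matrix (Fin q) (Fin q) ℂ)
      * (fromBlocks A B C 0 * fromBlocks (1 : Matrix (Fin n) (Fin n) ℂ) 0 (-(Bd * A))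
        (1 : Matrix (Fin p) (Fin p) ℂ))
      = fromBlocks G B C 0 := by
    rw [fromBlocks_multiply, fromBlocks_multiply, hblock]
    simp
  have hrank1 : (fromBlocks A B C 0).rank = (fromBlocks G B C 0).rank := by
    rw [← key, rank_mul_eq_right_of_isUnit_det _ _ hL, rank_mul_eq_left_of_isUnit_det _ _ hR]
  -- step 2: multiply by a generalized inverse
  set X' : Matrix (Fin n ⊕ Fin p) (Fin m ⊕ Fin q) ℂ := fromBlocks Gd Cd Bd 0 with hX'
  have hMX : fromBlocks G B C 0 * X' = fromBlocks (G * Gd + B * Bd) 0 0 (C * Cd) := by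
    rw [hX', fromBlocks_multiply]
    simp [hGCd, hCGd]
  have hMXM : fromBlocks G B C 0 * X' * fromBlocks G B C 0 = fromBlocks G B C 0 := by
    rw [hMX, fromBlocks_multiply, Matrix.add_mul, Matrix.add_mul,
      Matrix.mul_assoc B Bd G, hBdG, Matrix.mul_zero,
      Matrix.mul_assoc G Gd B, hGdB, Matrix.mul_zero, hGdG, hB1, hC1]
    simp
  have hrank2 : (fromBlocks G B C 0).rank = (fromBlocks G B C 0 * X').rank := by
    apply le_antisymm
    · conv_lhs => rw [← hMXM]
      exact rank_mul_le_left _ _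
    · exact rank_mul_le_left _ _
  -- step 3: ranks of the pieces
  have hPP : (G * Gd) * (G * Gd) = G * Gd := by rw [← Matrix.mul_assoc, hGdG]
  have hQP : (B * Bd) * (G * Gd) = 0 := by
    rw [← Matrix.mul_assoc (B * Bd) G Gd, Matrix.mul_assoc B Bd G, hBdG, Matrix.mul_zero,
      Matrix.zero_mul]
  have hPQ : (G * Gd) * (B * Bd) = 0 := by
    rw [← Matrix.mul_assoc (G * Gd) B Bd, Matrix.mul_assoc G Gd B, hGdB, Matrix.mul_zero,
      Matrix.zero_mul]
  have hadd : (G * Gd + B * Bd).rank = (G * Gd).rank + (B * Bd).rank := by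
    apply rank_add_disj _ _ (G * Gd)
    · rw [Matrix.add_mul, hPP, hQP, add_zero]
    · rintro v ⟨x, rfl⟩ ⟨y, hy⟩
      have e1 : (G * Gd).mulVecLin ((G * Gd).mulVecLin x) = (G * Gd).mulVecLin x := by
        rw [← LinearMap.comp_apply, ← mulVecLin_mul, hPP]
      have e2 : (G * Gd).mulVecLin ((G * Gd).mulVecLin x) = 0 := by
        rw [← hy, ← LinearMap.comp_apply, ← mulVecLin_mul, hPQ]
        simp
      rw [← e1, e2]
  have hrG : (G * Gd).rank = G.rank := by
    apply le_antisymm (rank_mul_le_left _ _)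
    conv_lhs => rw [← hGdG]
    exact rank_mul_le_left _ _
  have hrB : (B * Bd).rank = B.rank := by
    apply le_antisymm (rank_mul_le_left _ _)
    conv_lhs => rw [← hB1]
    exact rank_mul_le_left _ _
  have hrC : (C * Cd).rank = C.rank := by
    apply le_antisymm (rank_mul_le_left _ _)
    conv_lhs => rw [← hC1]
    exact rank_mul_le_left _ _
  rw [hrank1, hrank2, hMX, rank_fromBlocks_diag, hadd, hrG, hrB, hrC]
  omega
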